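/- Let μ ≠ 0 be real, C = I_{p,q,r} the diagonal matrix with p ones, q minus-ones, and r zeros, σ a diagonal matrix with σ² = I, and H a real vector with HᵀCH = 0 and HᵀCσH ≠ 0. Define G(λ) = (λ² - μ²)⁻¹ ( λ² I + (2λμ/(HᵀCσH))[σ, HHᵀ]C + (2μ²/(HᵀCσH))(σHHᵀ + HHᵀσ)C - μ² I ). Then G satisfies the symmetry (G(λ̄))* C G(λ) = C for all λ ≠ ±μ (with λ complex, G extended by the same formula). -/

import Mathlib

open Matrix

private lemma key {R : Type*} [Ring R] [Algebra ℂ R] (c u v : R) (h s pp b : ℂ)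
    (huv : u*c*v = 0) (hvu : v*c*u = 0) (huu : u*c*u = h•u) (hvv : v*c*v = h•v)
    (hscal : 2*s*b + h*(b^2 - pp^2) = 0) :
    (s•(1:R) + pp•(c*(u-v)) + b•(c*(u+v))) *
      (c * (s•(1:R) + (-pp)•((u-v)*c) + b•((u+v)*c))) = (s^2)•c := by
  have f1 : (u-v)*c*(u-v) = h•(u+v) := by
    simp only [sub_mul, mul_sub]; rw [huu, huv, hvu, hvv]; module
  have f2 : (u-v)*c*(u+v) = h•(u-v) := by
    simp only [sub_mul, mul_add, add_mul]; rw [huu, huv, hvu, hvv]; module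
  have f3 : (u+v)*c*(u-v) = h•(u-v) := by
    simp only [sub_mul, mul_sub, add_mul]; rw [huu, huv, hvu, hvv]; module
  have f4 : (u+v)*c*(u+v) = h•(u+v) := by
    simp only [add_mul, mul_add]; rw [huu, huv, hvu, hvv]; module
  have hPX : (c*(u-v)) * (c*(u-v)*c) = h • (c*(u+v)*c) := by
    rw [show c*(u-v) * (c*(u-v)*c) = c * ((u-v)*c*(u-v)) * c by noncomm_ring,
      f1, mul_smul_comm, smul_mul_assoc]
  have hPY : (c*(u-v)) * (c*(u+v)*c) = h • (c*(u-v)*c) := by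
    rw [show c*(u-v) * (c*(u+v)*c) = c * ((u-v)*c*(u+v)) * c by noncomm_ring,
      f2, mul_smul_comm, smul_mul_assoc]
  have hQX : (c*(u+v)) * (c*(u-v)*c) = h • (c*(u-v)*c) := by
    rw [show c*(u+v) * (c*(u-v)*c) = c * ((u+v)*c*(u-v)) * c by noncomm_ring,
      f3, mul_smul_comm, smul_mul_assoc]
  have hQY : (c*(u+v)) * (c*(u+v)*c) = h • (c*(u+v)*c) := by
    rw [show c*(u+v) * (c*(u+v)*c) = c * ((u+v)*c*(u+v)) * c by noncomm_ring,
      f4, mul_smul_comm, smul_mul_assoc]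
  have hcS' : c * (s•(1:R) + (-pp)•((u-v)*c) + b•((u+v)*c))
      = s•c + (-pp)•(c*(u-v)*c) + b•(c*(u+v)*c) := by
    rw [mul_add, mul_add, mul_smul_comm, mul_smul_comm, mul_smul_comm,
      mul_one, ← mul_assoc, ← mul_assoc]
  rw [hcS']
  set P := c*(u-v) with hP
  set Q := c*(u+v) with hQ
  set X := P*c with hX
  set Y := Q*c with hY
  have hPc : P * c = X := rfl
  have hQc : Q * c = Y := rfl
  simp only [add_mul, smul_mul_assoc, one_mul, mul_add, mul_smul_comm, mul_one,
    hPX, hPY, hQX, hQY, hPc, hQc, smul_smul]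
  match_scalars <;> first | ring1 | linear_combination hscal

private lemma helper {R : Type*} [Ring R] [StarRing R] [Algebra ℂ R] [StarModule ℂ R]
    (c u v : R) (h m lam : ℂ)
    (hcstar : star c = c) (hustar : star u = v) (hvstar : star v = u)
    (hh : star h = h) (hhne : h ≠ 0) (hsm : star m = m) (hm : m ≠ 0)
    (hl1 : lam ≠ m) (hl2 : lam ≠ -m)
    (huv : u*c*v = 0) (hvu : v*c*u = 0) (huu : u*c*u = h•u) (hvv : v*c*v = h•v) :
    star (((starRingEnd ℂ lam)^2 - m^2)⁻¹ • ((starRingEnd ℂ lam)^2 • (1:R)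
        + (2*(starRingEnd ℂ lam)*m/h) • ((v-u)*c) + (2*m^2/h) • ((v+u)*c) - m^2•(1:R)))
      * c * ((lam^2 - m^2)⁻¹ • (lam^2 • (1:R)
        + (2*lam*m/h) • ((v-u)*c) + (2*m^2/h) • ((v+u)*c) - m^2•(1:R))) = c := by
  have hsne : lam^2 - m^2 ≠ 0 := by
    rw [show lam^2 - m^2 = (lam - m) * (lam + m) by ring]
    exact mul_ne_zero (sub_ne_zero.mpr hl1)
      (fun hc => hl2 (eq_neg_of_add_eq_zero_left hc))
  have hscal : 2*(lam^2 - m^2)*(2*m^2/h) + h*((2*m^2/h)^2 - (2*lam*m/h)^2) = 0 := by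
    field_simp
    ring
  -- normalize the first factor
  have hstar1 : star (((starRingEnd ℂ lam)^2 - m^2)⁻¹ • ((starRingEnd ℂ lam)^2 • (1:R)
        + (2*(starRingEnd ℂ lam)*m/h) • ((v-u)*c) + (2*m^2/h) • ((v+u)*c) - m^2•(1:R)))
      = (lam^2 - m^2)⁻¹ • ((lam^2 - m^2) • (1:R)
        + (2*lam*m/h) • (c*(u-v)) + (2*m^2/h) • (c*(u+v))) := by
    rw [star_smul, star_sub, star_add, star_add, star_smul, star_smul, star_smul,
      star_smul, star_one, StarMul.star_mul, StarMul.star_mul, star_sub, star_add,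
      hcstar, hustar, hvstar]
    have k1 : star (((starRingEnd ℂ lam)^2 - m^2)⁻¹) = (lam^2 - m^2)⁻¹ := by
      rw [star_inv₀, star_sub, star_pow, star_pow, hsm, RCLike.star_def,
        Complex.conj_conj]
    have k2 : star ((starRingEnd ℂ lam)^2) = lam^2 := by
      rw [star_pow, RCLike.star_def, Complex.conj_conj]
    have k3 : star (2*(starRingEnd ℂ lam)*m/h) = 2*lam*m/h := by
      rw [star_div₀, hh, star_mul', star_mul', hsm, RCLike.star_def, Complex.conj_conj, map_ofNat]
    have k4 : star (2*m^2/h) = 2*m^2/h := by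
      rw [star_div₀, hh, star_mul', star_pow, hsm]
      norm_num
    rw [k1, k2, k3, k4, star_pow, hsm]
    congr 1
    rw [sub_smul]
    module
  rw [hstar1]
  have h2 : lam^2 • (1:R) + (2*lam*m/h) • ((v-u)*c) + (2*m^2/h) • ((v+u)*c) - m^2•(1:R)
      = (lam^2 - m^2) • (1:R) + (-(2*lam*m/h)) • ((u-v)*c) + (2*m^2/h) • ((u+v)*c) := by
    rw [show (v-u)*c = -((u-v)*c) by noncomm_ring, show (v+u)*c = (u+v)*c by noncomm_ring,
      sub_smul]
    module
  rw [h2, smul_mul_assoc, smul_mul_assoc, mul_smul_comm, smul_smul, mul_assoc]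
  rw [key c u v h (lam^2 - m^2) (2*lam*m/h) (2*m^2/h) huv hvu huu hvv hscal]
  rw [smul_smul, show (lam^2-m^2)⁻¹ * (lam^2-m^2)⁻¹ * (lam^2-m^2)^2 = 1 by
    rw [pow_two (lam^2-m^2), show (lam^2-m^2)⁻¹*(lam^2-m^2)⁻¹*((lam^2-m^2)*(lam^2-m^2))
        = ((lam^2-m^2)⁻¹*(lam^2-m^2))*((lam^2-m^2)⁻¹*(lam^2-m^2)) by ring,
      inv_mul_cancel₀ hsne, one_mul], one_smul]

private lemma sandwich {n : Type*} [Fintype n] [DecidableEq n] (H : n → ℂ)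
    (M : Matrix n n ℂ) :
    vecMulVec H H * M * vecMulVec H H = (dotProduct H (M.mulVec H)) • vecMulVec H H := by
  ext i j
  simp only [mul_apply, vecMulVec_apply, mulVec, dotProduct, Matrix.smul_apply, smul_eq_mul,
    Finset.sum_mul, Finset.mul_sum]
  rw [Finset.sum_comm]
  exact Finset.sum_congr rfl fun k _ => Finset.sum_congr rfl fun l _ => by ring

/-- The Darboux matrix `G(λ)` built from a real vector `H` with `HᵀCH = 0`,
`HᵀCσH ≠ 0`, satisfies `(G(λ̄))ᴴ C G(λ) = C` for all `λ ≠ ±μ`. -/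
theorem stmt4 (p q r : ℕ) (μ : ℝ) (hμ : μ ≠ 0)
    (C : Matrix (Fin (p + q + r)) (Fin (p + q + r)) ℂ)
    (hC : C = Matrix.diagonal (fun i : Fin (p + q + r) =>
      if (i : ℕ) < p then 1 else if (i : ℕ) < p + q then -1 else 0))
    (σ : Matrix (Fin (p + q + r)) (Fin (p + q + r)) ℂ)
    (d : Fin (p + q + r) → ℝ)
    (hσ : σ = Matrix.diagonal (fun i => (d i : ℂ)))
    (hσ2 : σ * σ = 1)
    (H : Fin (p + q + r) → ℂ) (hHreal : ∀ i, (H i).im = 0)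
    (hH1 : dotProduct H (C.mulVec H) = 0)
    (hH2 : dotProduct H ((C * σ).mulVec H) ≠ 0)
    (G : ℂ → Matrix (Fin (p + q + r)) (Fin (p + q + r)) ℂ)
    (hG : ∀ lam : ℂ, G lam = (lam ^ 2 - (μ : ℂ) ^ 2)⁻¹ •
      (lam ^ 2 • (1 : Matrix (Fin (p + q + r)) (Fin (p + q + r)) ℂ)
        + (2 * lam * (μ : ℂ) / dotProduct H ((C * σ).mulVec H)) •
            ((σ * Matrix.vecMulVec H H - Matrix.vecMulVec H H * σ) * C)
        + (2 * (μ : ℂ) ^ 2 / dotProduct H ((C * σ).mulVec H)) •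
            ((σ * Matrix.vecMulVec H H + Matrix.vecMulVec H H * σ) * C)
        - (μ : ℂ) ^ 2 • (1 : Matrix (Fin (p + q + r)) (Fin (p + q + r)) ℂ))) :
    ∀ lam : ℂ, lam ≠ (μ : ℂ) → lam ≠ -(μ : ℂ) →
      (G (starRingEnd ℂ lam)).conjTranspose * C * G lam = C := by
  intro lam hl1 hl2
  have hHs : ∀ i, star (H i) = H i := fun i => Complex.conj_eq_iff_im.mpr (hHreal i)
  have hCstar : star C = C := by
    rw [Matrix.star_eq_conjTranspose, hC, diagonal_conjTranspose]
    have : (star fun i : Fin (p+q+r) =>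
        if (i:ℕ) < p then (1:ℂ) else if (i:ℕ) < p + q then -1 else 0)
        = fun i : Fin (p+q+r) =>
        if (i:ℕ) < p then (1:ℂ) else if (i:ℕ) < p + q then -1 else 0 := by
      funext i
      rw [Pi.star_apply]
      split_ifs <;> simp
    rw [this]
  have hσstar : star σ = σ := by
    rw [Matrix.star_eq_conjTranspose, hσ, diagonal_conjTranspose]
    have : (star fun i : Fin (p+q+r) => ((d i : ℂ)))
        = fun i : Fin (p+q+r) => ((d i : ℂ)) := by
      funext i
      rw [Pi.star_apply]
      exact Complex.conj_ofReal _
    rw [this]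
  have hKstar : star (vecMulVec H H) = vecMulVec H H := by
    rw [Matrix.star_eq_conjTranspose]
    ext i j
    rw [conjTranspose_apply, vecMulVec_apply, vecMulVec_apply, star_mul',
      hHs, hHs, mul_comm]
  have hustar : star (vecMulVec H H * σ) = σ * vecMulVec H H := by
    rw [StarMul.star_mul, hσstar, hKstar]
  have hvstar : star (σ * vecMulVec H H) = vecMulVec H H * σ := by
    rw [StarMul.star_mul, hσstar, hKstar]
  have hCσcomm : C * σ = σ * C := by
    rw [hC, hσ, diagonal_mul_diagonal, diagonal_mul_diagonal]
    have : (fun i : Fin (p+q+r) =>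
        (if (i:ℕ) < p then (1:ℂ) else if (i:ℕ) < p + q then -1 else 0) * (d i : ℂ))
        = fun i : Fin (p+q+r) =>
        (d i : ℂ) * (if (i:ℕ) < p then (1:ℂ) else if (i:ℕ) < p + q then -1 else 0) := by
      funext i
      ring
    rw [this]
  have hσCσ : σ * C * σ = C := by
    rw [mul_assoc, hCσcomm, ← mul_assoc, hσ2, one_mul]
  have hKCK : vecMulVec H H * C * vecMulVec H H = 0 := by
    rw [sandwich, hH1, zero_smul]
  have hh : star (dotProduct H ((C * σ).mulVec H)) = dotProduct H ((C * σ).mulVec H) := by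
    rw [hC, hσ, diagonal_mul_diagonal]
    simp only [dotProduct, mulVec_diagonal]
    rw [star_sum]
    refine Finset.sum_congr rfl fun i _ => ?_
    simp [star_mul', hHs, Complex.conj_ofReal, apply_ite (star : ℂ → ℂ)]
  have huv : (vecMulVec H H * σ) * C * (σ * vecMulVec H H) = 0 := by
    rw [show (vecMulVec H H * σ) * C * (σ * vecMulVec H H)
        = vecMulVec H H * (σ * C * σ) * vecMulVec H H by noncomm_ring, hσCσ, hKCK]
  have hvu : (σ * vecMulVec H H) * C * (vecMulVec H H * σ) = 0 := by
    rw [show (σ * vecMulVec H H) * C * (vecMulVec H H * σ)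
        = σ * (vecMulVec H H * C * vecMulVec H H) * σ by noncomm_ring, hKCK]
    simp
  have huu : (vecMulVec H H * σ) * C * (vecMulVec H H * σ)
      = (dotProduct H ((C * σ).mulVec H)) • (vecMulVec H H * σ) := by
    rw [show (vecMulVec H H * σ) * C * (vecMulVec H H * σ)
        = (vecMulVec H H * (σ * C) * vecMulVec H H) * σ by noncomm_ring,
      ← hCσcomm, sandwich, smul_mul_assoc]
  have hvv : (σ * vecMulVec H H) * C * (σ * vecMulVec H H)
      = (dotProduct H ((C * σ).mulVec H)) • (σ * vecMulVec H H) := by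
    rw [show (σ * vecMulVec H H) * C * (σ * vecMulVec H H)
        = σ * (vecMulVec H H * (C * σ) * vecMulVec H H) by noncomm_ring,
      sandwich, mul_smul_comm]
  rw [hG lam, hG (starRingEnd ℂ lam), ← Matrix.star_eq_conjTranspose]
  exact helper C (vecMulVec H H * σ) (σ * vecMulVec H H)
    (dotProduct H ((C * σ).mulVec H)) (μ : ℂ) lam
    hCstar hustar hvstar hh hH2 (Complex.conj_ofReal μ)
    (Complex.ofReal_ne_zero.mpr hμ) hl1 hl2 huv hvu huu hvv
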